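/- For any decision rule system S: (a) h_EAR(S) ≥ h_AR(S) ≥ d(S); (b) if S is SR-reduced, then h_ESR(S) ≥ d(S); (c) if S is AD-reduced, then h_EAD(S) ≥ d(S). -/

import Mathlib

open scoped Classical
noncomputable section

/-- Attributes are natural numbers. -/
abbrev Attr := ℕ
/-- A value in an equation system: `some δ` is a number, `none` is the special symbol `*`. -/
abbrev Val := Option ℕ
/-- A decision rule: left-hand side (set of equations attribute = numeric value) and
right-hand side (decision). -/
abbrev Rule := Finset (Attr × ℕ) × ℕ
/-- An equation system over attributes with possibly `*` values. -/
abbrev EqSys := Finset (Attr × Val)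
/-- A decision rule system. -/
abbrev DRS := Finset Rule

/-- The equation system `K(r)` of a rule. -/
def Kr (r : Rule) : EqSys := r.1.image fun p => (p.1, some p.2)
/-- The set `A(r)` of attributes of a rule. -/
def Ar (r : Rule) : Finset Attr := r.1.image Prod.fst
/-- The length of a rule. -/
def ruleLen (r : Rule) : ℕ := r.1.card
/-- Well-formed rule: attributes in the left-hand side are pairwise different. -/
def WFRule (r : Rule) : Prop := ∀ p ∈ r.1, ∀ q ∈ r.1, p.1 = q.1 → p.2 = q.2
/-- Well-formed decision rule system: a finite nonempty set of well-formed rules. -/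
def WFS (S : DRS) : Prop := S.Nonempty ∧ ∀ r ∈ S, WFRule r

/-- `A(S)`: attributes of a system. -/
def AS (S : DRS) : Finset Attr := S.biUnion Ar
/-- `n(S) = |A(S)|`. -/
def nS (S : DRS) : ℕ := (AS S).card
/-- `d(S)`: the maximum length of a rule in `S`. -/
def dS (S : DRS) : ℕ := S.sup ruleLen
/-- `V_S(a)`: values of attribute `a` occurring in `S`. -/
def VS (S : DRS) (a : Attr) : Finset ℕ :=
  S.biUnion fun r => (r.1.filter fun p => p.1 = a).image Prod.snd
/-- `k(S)`: maximum number of values of a single attribute. -/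
def kS (S : DRS) : ℕ := (AS S).sup fun a => (VS S a).card

/-- Branching sets of o-decision trees: `V_S(a)`. -/
def Bo (S : DRS) (a : Attr) : Finset Val := (VS S a).image some
/-- Branching sets of e-decision trees: `EV_S(a) = V_S(a) ∪ {*}`. -/
def Be (S : DRS) (a : Attr) : Finset Val := insert none (Bo S a)

/-- Consistency of an equation system. -/
def Consistent (K : EqSys) : Prop := ∀ p ∈ K, ∀ q ∈ K, p.1 = q.1 → p.2 = q.2

/-- Decision trees: terminal nodes labeled with sets of rules, working nodes labeled
with an attribute and having a child for each possible value (only children whose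
labels lie in the relevant branching set are meaningful). -/
inductive DTree where
  | leaf : DRS → DTree
  | node : Attr → (Val → DTree) → DTree

/-- Depth of a decision tree with respect to branching sets `B`. -/
def depthT (B : Attr → Finset Val) : DTree → ℕ
  | .leaf _ => 0
  | .node a c => ((B a).sup fun v => depthT B (c v)) + 1

/-- A decision tree over a system `S` (with branching sets `B`). -/
def TreeOver (B : Attr → Finset Val) (S : DRS) : DTree → Prop
  | .leaf Z => Z ⊆ S
  | .node a c => a ∈ AS S ∧ ∀ v ∈ B a, TreeOver B S (c v)

/-- `PathT B Γ K Z`: there is a complete path in `Γ` (following edges with labels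
in the branching sets `B`) with equation system `K` and terminal label `Z`. -/
inductive PathT (B : Attr → Finset Val) : DTree → EqSys → DRS → Prop
  | leaf (Z : DRS) : PathT B (.leaf Z) ∅ Z
  | node (a : Attr) (c : Val → DTree) (v : Val) (K : EqSys) (Z : DRS) :
      v ∈ B a → PathT B (c v) K Z → PathT B (.node a c) (insert (a, v) K) Z

/-- `Γ` solves the problem given by correctness condition `cond` on (K(ξ), τ(ξ)). -/
def Solves (cond : EqSys → DRS → Prop) (B : Attr → Finset Val) (Γ : DTree) : Prop :=
  ∀ K Z, PathT B Γ K Z → Consistent K → cond K Z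

/-- Correctness condition for the All Rules problem. -/
def CondAR (S : DRS) (K : EqSys) (Z : DRS) : Prop :=
  (∀ r ∈ Z, Kr r ⊆ K) ∧ ∀ r ∈ S, r ∉ Z → ¬ Consistent (Kr r ∪ K)
/-- Correctness condition for the All Decisions problem. -/
def CondAD (S : DRS) (K : EqSys) (Z : DRS) : Prop :=
  (∀ r ∈ Z, Kr r ⊆ K) ∧ ∀ r ∈ S, r.2 ∉ Z.image Prod.snd → ¬ Consistent (Kr r ∪ K)
/-- Correctness condition for the Some Rules problem. -/
def CondSR (S : DRS) (K : EqSys) (Z : DRS) : Prop :=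
  (∀ r ∈ Z, Kr r ⊆ K) ∧ (Z = ∅ → ∀ r ∈ S, ¬ Consistent (Kr r ∪ K))

/-- Minimum depth of a decision tree over `S` solving the given problem. -/
def hgen (cond : DRS → EqSys → DRS → Prop) (B : DRS → Attr → Finset Val) (S : DRS) : ℕ :=
  sInf {m | ∃ Γ, TreeOver (B S) S Γ ∧ Solves (cond S) (B S) Γ ∧ depthT (B S) Γ = m}

def hAR (S : DRS) : ℕ := hgen CondAR Bo S
def hEAR (S : DRS) : ℕ := hgen CondAR Be S
def hAD (S : DRS) : ℕ := hgen CondAD Bo S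
def hEAD (S : DRS) : ℕ := hgen CondAD Be S
def hSR (S : DRS) : ℕ := hgen CondSR Bo S
def hESR (S : DRS) : ℕ := hgen CondSR Be S

/-- SR-reduced system. -/
def SRred (S : DRS) : Prop := ∀ r ∈ S, ¬ ∃ r' ∈ S, r'.1 ⊂ r.1
/-- AD-reduced system. -/
def ADred (S : DRS) : Prop := ∀ r ∈ S, ¬ ∃ r' ∈ S, r'.1 ⊂ r.1 ∧ r'.2 = r.2
/-- `R_SR(S)`. -/
def RSR (S : DRS) : DRS := S.filter fun r => ¬ ∃ r' ∈ S, r'.1 ⊂ r.1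
/-- `R_AD(S)`. -/
def RAD (S : DRS) : DRS := S.filter fun r => ¬ ∃ r' ∈ S, r'.1 ⊂ r.1 ∧ r'.2 = r.2

/-- `h_C(n,d,k)`: minimum of `h S` over systems with the given parameters. -/
def hmin (h : DRS → ℕ) (n d k : ℕ) : ℕ :=
  sInf {m | ∃ S, WFS S ∧ nS S = n ∧ dS S = d ∧ kS S = k ∧ h S = m}
/-- `H_C(n,d,k)`: maximum of `h S` over systems with the given parameters. -/
def Hmax (h : DRS → ℕ) (n d k : ℕ) : ℕ :=
  sSup {m | ∃ S, WFS S ∧ nS S = n ∧ dS S = d ∧ kS S = k ∧ h S = m}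
/-- `h_C^R(n,d,k)`: minimum of `h S` over reduced systems (`P`) with given parameters. -/
def hminR (h : DRS → ℕ) (P : DRS → Prop) (n d k : ℕ) : ℕ :=
  sInf {m | ∃ S, WFS S ∧ P S ∧ nS S = n ∧ dS S = d ∧ kS S = k ∧ h S = m}
/-- `H_C^R(n,d,k)`: maximum of `h S` over reduced systems (`P`) with given parameters. -/
def HmaxR (h : DRS → ℕ) (P : DRS → Prop) (n d k : ℕ) : ℕ :=
  sSup {m | ∃ S, WFS S ∧ P S ∧ nS S = n ∧ dS S = d ∧ kS S = k ∧ h S = m}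

/-- Node cover of the hypergraph `G(S)`. -/
def NodeCover (S : DRS) (B : Finset Attr) : Prop :=
  B ⊆ AS S ∧ ∀ r ∈ S, Ar r ≠ ∅ → (Ar r ∩ B).Nonempty
/-- `β(S)`: minimum cardinality of a node cover of `G(S)`. -/
def nodeCoverNum (S : DRS) : ℕ := sInf {m | ∃ B, NodeCover S B ∧ B.card = m}

/-- `I_SR(S)`. -/
def ISR (S : DRS) : DRS := if ∀ r ∈ S, r.1 ≠ ∅ then S else S.filter fun r => r.1 = ∅
/-- `D_0(S)`: right-hand sides of length-0 rules. -/
def D0 (S : DRS) : Finset ℕ := (S.filter fun r => r.1 = ∅).image Prod.snd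
/-- `I_AD(S)`. -/
def IAD (S : DRS) : DRS := S.filter fun r => r.1 = ∅ ∨ r.2 ∉ D0 S

/-- `K(S, δ̄)` for an assignment `f` of numeric values to all attributes of `S`. -/
def KStuple (S : DRS) (f : Attr → ℕ) : EqSys := (AS S).image fun a => (a, some (f a))
/-- An incomplete decision rule system. -/
def IncompleteS (S : DRS) : Prop :=
  ∃ f : Attr → ℕ, (∀ a ∈ AS S, f a ∈ VS S a) ∧ ∀ r ∈ S, ¬ Consistent (Kr r ∪ KStuple S f)

/-- `r_α`: remove from the left-hand side of `r` all equations belonging to `α`. -/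
def resRule (α : EqSys) (r : Rule) : Rule :=
  (r.1.filter fun p => (p.1, (some p.2 : Val)) ∉ α, r.2)
/-- `S_α`: rules `r_α` for the rules `r ∈ S` with `K(r) ∪ α` consistent. -/
def Sres (α : EqSys) (S : DRS) : DRS :=
  (S.filter fun r => Consistent (Kr r ∪ α)).image (resRule α)

/-- Value chosen at a node labeled by an attribute `a ∉ A(S_α)` when building `Γ_α`:
the `α`-value of `a` if `a` occurs in `α`, and the minimum number of `V_S(a)` otherwise. -/
def chooseVal (α : EqSys) (S : DRS) (a : Attr) : Val :=
  if h : ∃ v, (a, v) ∈ α then Classical.choose h else some (sInf {n : ℕ | n ∈ VS S a})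

/-- The decision tree `Γ_α`. -/
def resTree (α : EqSys) (S : DRS) : DTree → DTree
  | .leaf Z => .leaf (Sres α Z)
  | .node a c =>
      if a ∈ AS (Sres α S) then .node a fun v => resTree α S (c v)
      else resTree α S (c (chooseVal α S a))

/-- The o-decision tree `o(Γ)`: remove all nodes reachable only via an edge labeled `*`. -/
def oTree : DTree → DTree
  | .leaf Z => .leaf Z
  | .node a c => .node a fun v => match v with
      | none => .leaf ∅
      | some x => oTree (c (some x))
section Aux

/-! ### Basic path/tree lemmas -/

lemma pathT_card_le {B : Attr → Finset Val} {Γ K Z} (h : PathT B Γ K Z) :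
    K.card ≤ depthT B Γ := by
  induction h with
  | leaf Z => simp [depthT]
  | node a c v K Z hv hp ih =>
    have h1 : K.card ≤ (B a).sup fun v => depthT B (c v) :=
      le_trans ih (Finset.le_sup (f := fun v => depthT B (c v)) hv)
    calc (insert (a, v) K).card ≤ K.card + 1 := Finset.card_insert_le _ _
      _ ≤ _ := by simpa [depthT] using Nat.add_le_add_right h1 1

lemma pathT_leaf_subset {B : Attr → Finset Val} {S : DRS} {Γ K Z}
    (h : PathT B Γ K Z) (ht : TreeOver B S Γ) : Z ⊆ S := by
  induction h with
  | leaf Z => exact ht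
  | node a c v K Z hv hp ih => exact ih (ht.2 v hv)

lemma pathT_exists {B : Attr → Finset Val} {S : DRS} (φ : Attr → Val)
    (hφ : ∀ a ∈ AS S, φ a ∈ B a) :
    ∀ {Γ}, TreeOver B S Γ → ∃ K Z, PathT B Γ K Z ∧ ∀ p ∈ K, p.2 = φ p.1 := by
  intro Γ
  induction Γ with
  | leaf Z => exact fun _ => ⟨∅, Z, PathT.leaf Z, by simp⟩
  | node a c ih =>
    intro ht
    obtain ⟨K, Z, hp, hK⟩ := ih (φ a) (ht.2 (φ a) (hφ a ht.1))
    refine ⟨insert (a, φ a) K, Z, PathT.node a c (φ a) K Z (hφ a ht.1) hp, ?_⟩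
    intro p hp'
    rcases Finset.mem_insert.mp hp' with h | h
    · subst h; rfl
    · exact hK p h

lemma treeOver_mono {B B' : Attr → Finset Val} {S : DRS}
    (hBB : ∀ a, B a ⊆ B' a) : ∀ {Γ}, TreeOver B' S Γ → TreeOver B S Γ := by
  intro Γ
  induction Γ with
  | leaf Z => exact id
  | node a c ih => exact fun ht => ⟨ht.1, fun v hv => ih v (ht.2 v (hBB a hv))⟩

lemma pathT_mono {B B' : Attr → Finset Val} (hBB : ∀ a, B a ⊆ B' a) {Γ K Z}
    (h : PathT B Γ K Z) : PathT B' Γ K Z := by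
  induction h with
  | leaf Z => exact PathT.leaf Z
  | node a c v K Z hv hp ih => exact PathT.node a c v K Z (hBB a hv) ih

lemma depthT_mono {B B' : Attr → Finset Val} (hBB : ∀ a, B a ⊆ B' a) :
    ∀ Γ, depthT B Γ ≤ depthT B' Γ := by
  intro Γ
  induction Γ with
  | leaf Z => simp [depthT]
  | node a c ih =>
    simp only [depthT, Nat.add_le_add_iff_right]
    exact Finset.sup_le fun v hv =>
      le_trans (ih v) (Finset.le_sup (f := fun v => depthT B' (c v)) (hBB a hv))

end Aux
section Aux2

lemma mem_VS_of_rule {S : DRS} {r : Rule} {a : Attr} {δ : ℕ}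
    (hr : r ∈ S) (h : (a, δ) ∈ r.1) : δ ∈ VS S a := by
  refine Finset.mem_biUnion.mpr ⟨r, hr, Finset.mem_image.mpr ⟨(a, δ), ?_, rfl⟩⟩
  exact Finset.mem_filter.mpr ⟨h, rfl⟩

lemma VS_nonempty {S : DRS} {a : Attr} (ha : a ∈ AS S) : (VS S a).Nonempty := by
  obtain ⟨r, hr, har⟩ := Finset.mem_biUnion.mp ha
  obtain ⟨p, hp, hpa⟩ := Finset.mem_image.mp har
  subst hpa
  exact ⟨p.2, mem_VS_of_rule hr hp⟩

lemma mem_AS_of_rule {S : DRS} {r : Rule} {a : Attr} {δ : ℕ}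
    (hr : r ∈ S) (h : (a, δ) ∈ r.1) : a ∈ AS S :=
  Finset.mem_biUnion.mpr ⟨r, hr, Finset.mem_image.mpr ⟨(a, δ), h, rfl⟩⟩

def fullTree (S : DRS) : List Attr → EqSys → DTree
  | [], K => .leaf (S.filter fun r => Kr r ⊆ K)
  | a :: l, K => .node a fun v => fullTree S l (insert (a, v) K)

lemma fullTree_over {B : Attr → Finset Val} {S : DRS} :
    ∀ (l : List Attr), (∀ a ∈ l, a ∈ AS S) → ∀ K0, TreeOver B S (fullTree S l K0) := by
  intro l
  induction l with
  | nil => intro _ K0; exact Finset.filter_subset _ _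
  | cons a l ih =>
    intro hl K0
    exact ⟨hl a (by simp), fun v _ => ih (fun b hb => hl b (by simp [hb])) _⟩

lemma fullTree_path {B : Attr → Finset Val} {S : DRS} :
    ∀ (l : List Attr) (K0 K : EqSys) (Z : DRS), PathT B (fullTree S l K0) K Z →
      Z = S.filter (fun r => Kr r ⊆ K ∪ K0) ∧ ∀ a ∈ l, ∃ v, (a, v) ∈ K := by
  intro l
  induction l with
  | nil =>
    intro K0 K Z hp
    cases hp
    exact ⟨by simp, fun a ha => absurd ha (List.not_mem_nil (a := a))⟩
  | cons a l ih =>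
    intro K0 K Z hp
    cases hp with
    | node _ _ v K' Z hv hp' =>
      obtain ⟨hZ, hcov⟩ := ih _ K' Z hp'
      have hset : K' ∪ insert (a, v) K0 = insert (a, v) K' ∪ K0 := by
        ext p; simp [Finset.mem_union, Finset.mem_insert]
      constructor
      · rw [hZ, hset]
      · intro b hb
        rcases List.mem_cons.mp hb with h | h
        · exact ⟨v, by simp [h]⟩
        · obtain ⟨v', hv'⟩ := hcov b h
          exact ⟨v', Finset.mem_insert_of_mem hv'⟩

lemma key_incons {S : DRS} {K : EqSys} {r : Rule} (hr : r ∈ S)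
    (hcov : ∀ a ∈ AS S, ∃ v, (a, v) ∈ K) (hns : ¬ Kr r ⊆ K) :
    ¬ Consistent (Kr r ∪ K) := by
  intro hcons
  obtain ⟨p, hpK, hpnK⟩ := Finset.not_subset.mp hns
  obtain ⟨q, hq, hqp⟩ := Finset.mem_image.mp hpK
  obtain ⟨v, hv⟩ := hcov q.1 (mem_AS_of_rule hr hq)
  have := hcons (q.1, some q.2) (Finset.mem_union_left _ (by rw [hqp]; exact hpK))
    (q.1, v) (Finset.mem_union_right _ hv) rfl
  have h2 : some q.2 = v := this
  exact hpnK (by rw [← hqp, h2]; exact hv)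

/-- The key universal solving tree, generic over branching sets. -/
lemma exists_univ_tree (B : Attr → Finset Val) (S : DRS) :
    ∃ Γ, TreeOver B S Γ ∧ ∀ K Z, PathT B Γ K Z →
      Z = S.filter (fun r => Kr r ⊆ K) ∧ ∀ a ∈ AS S, ∃ v, (a, v) ∈ K := by
  refine ⟨fullTree S (AS S).toList ∅, fullTree_over _ (fun a ha => Finset.mem_toList.mp ha) _, ?_⟩
  intro K Z hp
  obtain ⟨hZ, hcov⟩ := fullTree_path _ _ _ _ hp
  exact ⟨by simpa using hZ, fun a ha => hcov a (Finset.mem_toList.mpr ha)⟩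

end Aux2
section Aux3

lemma univ_solves (B : Attr → Finset Val) (S : DRS)
    (cond : EqSys → DRS → Prop)
    (hc : ∀ K : EqSys, (∀ a ∈ AS S, ∃ v, (a, v) ∈ K) →
      cond K (S.filter fun r => Kr r ⊆ K)) :
    ∃ m, ∃ Γ, TreeOver B S Γ ∧ Solves cond B Γ ∧ depthT B Γ = m := by
  obtain ⟨Γ, hover, hpath⟩ := exists_univ_tree B S
  refine ⟨depthT B Γ, Γ, hover, ?_, rfl⟩
  intro K Z hp _
  obtain ⟨hZ, hcov⟩ := hpath K Z hp
  rw [hZ]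
  exact hc K hcov

lemma setAR_nonempty (B : Attr → Finset Val) (S : DRS) :
    {m | ∃ Γ, TreeOver B S Γ ∧ Solves (CondAR S) B Γ ∧ depthT B Γ = m}.Nonempty := by
  refine univ_solves B S (CondAR S) fun K hcov => ?_
  refine ⟨fun r hr => (Finset.mem_filter.mp hr).2, fun r hr hnz => ?_⟩
  exact key_incons hr hcov fun hsub => hnz (Finset.mem_filter.mpr ⟨hr, hsub⟩)

lemma setSR_nonempty (B : Attr → Finset Val) (S : DRS) :
    {m | ∃ Γ, TreeOver B S Γ ∧ Solves (CondSR S) B Γ ∧ depthT B Γ = m}.Nonempty := by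
  refine univ_solves B S (CondSR S) fun K hcov => ?_
  refine ⟨fun r hr => (Finset.mem_filter.mp hr).2, fun hZ r hr => ?_⟩
  refine key_incons hr hcov fun hsub => ?_
  have : r ∈ (∅ : DRS) := hZ ▸ Finset.mem_filter.mpr ⟨hr, hsub⟩
  simp at this

lemma setAD_nonempty (B : Attr → Finset Val) (S : DRS) :
    {m | ∃ Γ, TreeOver B S Γ ∧ Solves (CondAD S) B Γ ∧ depthT B Γ = m}.Nonempty := by
  refine univ_solves B S (CondAD S) fun K hcov => ?_
  refine ⟨fun r hr => (Finset.mem_filter.mp hr).2, fun r hr hnz => ?_⟩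
  refine key_incons hr hcov fun hsub => ?_
  exact hnz (Finset.mem_image.mpr ⟨r, Finset.mem_filter.mpr ⟨hr, hsub⟩, rfl⟩)

/-! ### Lower bound machinery -/

lemma Kr_card (r : Rule) : (Kr r).card = ruleLen r := by
  unfold Kr ruleLen
  exact Finset.card_image_of_injective _ (fun p q h => by
    obtain ⟨h1, h2⟩ := Prod.mk.injEq .. ▸ h
    exact Prod.ext h1 (Option.some_injective _ h2))

lemma Kr_subset_iff {r r' : Rule} : Kr r' ⊆ Kr r ↔ r'.1 ⊆ r.1 := by
  constructor
  · intro h p hp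
    have : (p.1, (some p.2 : Val)) ∈ Kr r := h (Finset.mem_image.mpr ⟨p, hp, rfl⟩)
    obtain ⟨q, hq, hqe⟩ := Finset.mem_image.mp this
    obtain ⟨h1, h2⟩ := Prod.mk.injEq .. ▸ hqe
    have : q = p := Prod.ext h1 (Option.some_injective _ h2)
    rwa [← this]
  · intro h p hp
    obtain ⟨q, hq, hqe⟩ := Finset.mem_image.mp hp
    exact hqe ▸ Finset.mem_image.mpr ⟨q, h hq, rfl⟩

/-- Consistency of `Kr r ∪ K` when `K` consists of `φ`-values and `φ` agrees with `r`. -/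
lemma cons_union {r : Rule} {K : EqSys} {φ : Attr → Val} (_hwf : WFRule r)
    (hφr : ∀ p ∈ r.1, φ p.1 = some p.2) (hK : ∀ p ∈ K, p.2 = φ p.1) :
    Consistent (Kr r ∪ K) := by
  have hval : ∀ p ∈ Kr r ∪ K, p.2 = φ p.1 := by
    intro p hp
    rcases Finset.mem_union.mp hp with h | h
    · obtain ⟨q, hq, hqe⟩ := Finset.mem_image.mp h
      rw [← hqe]
      exact (hφr q hq).symm
    · exact hK p h
  intro p hp q hq h1
  rw [hval p hp, hval q hq, h1]

/-- Shared skeleton of the lower-bound arguments. -/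
lemma lower_core {B : Attr → Finset Val} {S : DRS} {Γ : DTree}
    (cond : EqSys → DRS → Prop) (hwfS : WFS S) {r : Rule} (hr : r ∈ S)
    (φ : Attr → Val) (hφB : ∀ a ∈ AS S, φ a ∈ B a)
    (hφr : ∀ p ∈ r.1, φ p.1 = some p.2)
    (ht : TreeOver B S Γ) (hsol : Solves cond B Γ) :
    ∃ K Z, cond K Z ∧ Consistent (Kr r ∪ K) ∧ (∀ p ∈ K, p.2 = φ p.1) ∧
      Z ⊆ S ∧ K.card ≤ depthT B Γ := by
  obtain ⟨K, Z, hp, hK⟩ := pathT_exists φ hφB ht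
  have hconsK : Consistent K := fun p hp' q hq' h1 => by
    rw [hK p hp', hK q hq', h1]
  refine ⟨K, Z, hsol K Z hp hconsK, cons_union (hwfS.2 r hr) hφr hK, hK,
    pathT_leaf_subset hp ht, pathT_card_le hp⟩

end Aux3
section Aux4

/-- φ for o-trees: agree with `r`, otherwise any value from `VS S a`. -/
def phiO (S : DRS) (r : Rule) (a : Attr) : Val :=
  if h : ∃ δ, (a, δ) ∈ r.1 then some h.choose
  else if h2 : (VS S a).Nonempty then some h2.choose else none

/-- φ for e-trees: agree with `r`, otherwise `*`. -/
def phiE (r : Rule) (a : Attr) : Val :=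
  if h : ∃ δ, (a, δ) ∈ r.1 then some h.choose else none

lemma phiO_agree {S : DRS} {r : Rule} (hwf : WFRule r) :
    ∀ p ∈ r.1, phiO S r p.1 = some p.2 := by
  intro p hp
  have h : ∃ δ, (p.1, δ) ∈ r.1 := ⟨p.2, hp⟩
  rw [phiO, dif_pos h]
  exact congrArg some (hwf (p.1, h.choose) h.choose_spec p hp rfl)

lemma phiE_agree {r : Rule} (hwf : WFRule r) :
    ∀ p ∈ r.1, phiE r p.1 = some p.2 := by
  intro p hp
  have h : ∃ δ, (p.1, δ) ∈ r.1 := ⟨p.2, hp⟩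
  rw [phiE, dif_pos h]
  exact congrArg some (hwf (p.1, h.choose) h.choose_spec p hp rfl)

lemma phiO_mem {S : DRS} {r : Rule} (hr : r ∈ S) :
    ∀ a ∈ AS S, phiO S r a ∈ Bo S a := by
  intro a ha
  unfold phiO
  split
  · next h => exact Finset.mem_image.mpr ⟨h.choose, mem_VS_of_rule hr h.choose_spec, rfl⟩
  · rw [dif_pos (VS_nonempty ha)]
    exact Finset.mem_image.mpr ⟨_, (VS_nonempty ha).choose_spec, rfl⟩

lemma phiE_mem {S : DRS} {r : Rule} (hr : r ∈ S) :
    ∀ a ∈ AS S, phiE r a ∈ Be S a := by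
  intro a ha
  unfold phiE
  split
  · next h =>
    exact Finset.mem_insert_of_mem
      (Finset.mem_image.mpr ⟨h.choose, mem_VS_of_rule hr h.choose_spec, rfl⟩)
  · exact Finset.mem_insert_self _ _

lemma phiE_inv {r : Rule} {a : Attr} {δ : ℕ} (h : phiE r a = some δ) :
    (a, δ) ∈ r.1 := by
  unfold phiE at h
  split at h
  · next h1 =>
    have : h1.choose = δ := Option.some_injective _ h
    exact this ▸ h1.choose_spec
  · exact absurd h (by simp)

/-- From `Kr r' ⊆ K` and φ-compatibility with an e-type φ, deduce `r'.1 ⊆ r.1`. -/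
lemma sub_of_Kr_sub {r r' : Rule} {K : EqSys}
    (hK : ∀ p ∈ K, p.2 = phiE r p.1) (hsub : Kr r' ⊆ K) : r'.1 ⊆ r.1 := by
  intro p hp
  have hmem : (p.1, (some p.2 : Val)) ∈ K := hsub (Finset.mem_image.mpr ⟨p, hp, rfl⟩)
  have := (hK _ hmem).symm
  exact phiE_inv this

end Aux4

/-- lower bounds via the maximum rule length `d(S)`. -/
theorem stmt7 (S : DRS) (hS : WFS S) :
    (hAR S ≤ hEAR S ∧ dS S ≤ hAR S) ∧
    (SRred S → dS S ≤ hESR S) ∧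
    (ADred S → dS S ≤ hEAD S) := by
  obtain ⟨r, hr, hd⟩ := Finset.exists_mem_eq_sup S hS.1 ruleLen
  have hBo : ∀ a, Bo S a ⊆ Be S a := fun a => Finset.subset_insert _ _
  refine ⟨⟨?_, ?_⟩, ?_, ?_⟩
  · -- hAR ≤ hEAR
    obtain ⟨Γ, hov, hsol, hdep⟩ := Nat.sInf_mem (setAR_nonempty (Be S) S)
    calc hAR S ≤ depthT (Bo S) Γ :=
          Nat.sInf_le ⟨Γ, treeOver_mono hBo hov,
            fun K Z hp hc => hsol K Z (pathT_mono hBo hp) hc, rfl⟩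
      _ ≤ depthT (Be S) Γ := depthT_mono hBo Γ
      _ = hEAR S := hdep
  · -- dS ≤ hAR
    obtain ⟨Γ, hov, hsol, hdep⟩ := Nat.sInf_mem (setAR_nonempty (Bo S) S)
    obtain ⟨K, Z, hcond, hcons, hK, hZS, hcard⟩ :=
      lower_core (CondAR S) hS hr (phiO S r) (phiO_mem hr)
        (phiO_agree (hS.2 r hr)) hov hsol
    have hrZ : r ∈ Z := by
      by_contra hn
      exact hcond.2 r hr hn hcons
    have hsub : Kr r ⊆ K := hcond.1 r hrZ
    calc dS S = (Kr r).card := by unfold dS; rw [hd, Kr_card]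
      _ ≤ K.card := Finset.card_le_card hsub
      _ ≤ depthT (Bo S) Γ := hcard
      _ = hAR S := hdep
  · -- SR-reduced: dS ≤ hESR
    intro hSR
    obtain ⟨Γ, hov, hsol, hdep⟩ := Nat.sInf_mem (setSR_nonempty (Be S) S)
    obtain ⟨K, Z, hcond, hcons, hK, hZS, hcard⟩ :=
      lower_core (CondSR S) hS hr (phiE r) (phiE_mem hr)
        (phiE_agree (hS.2 r hr)) hov hsol
    have hZne : Z ≠ ∅ := fun h => hcond.2 h r hr hcons
    obtain ⟨r', hr'Z⟩ := Finset.nonempty_iff_ne_empty.mpr hZne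
    have hsub : r'.1 ⊆ r.1 := sub_of_Kr_sub hK (hcond.1 r' hr'Z)
    have heq : r'.1 = r.1 := by
      by_contra hne
      exact hSR r hr ⟨r', hZS hr'Z, ⟨hsub, fun h => hne (Finset.Subset.antisymm hsub h)⟩⟩
    calc dS S = (Kr r').card := by
          unfold dS; rw [hd, Kr_card]; unfold ruleLen; rw [heq]
      _ ≤ K.card := Finset.card_le_card (hcond.1 r' hr'Z)
      _ ≤ depthT (Be S) Γ := hcard
      _ = hESR S := hdep
  · -- AD-reduced: dS ≤ hEAD
    intro hAD
    obtain ⟨Γ, hov, hsol, hdep⟩ := Nat.sInf_mem (setAD_nonempty (Be S) S)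
    obtain ⟨K, Z, hcond, hcons, hK, hZS, hcard⟩ :=
      lower_core (CondAD S) hS hr (phiE r) (phiE_mem hr)
        (phiE_agree (hS.2 r hr)) hov hsol
    have hrd : r.2 ∈ Z.image Prod.snd := by
      by_contra hn
      exact hcond.2 r hr hn hcons
    obtain ⟨r', hr'Z, hr'd⟩ := Finset.mem_image.mp hrd
    have hsub : r'.1 ⊆ r.1 := sub_of_Kr_sub hK (hcond.1 r' hr'Z)
    have heq : r'.1 = r.1 := by
      by_contra hne
      exact hAD r hr ⟨r', hZS hr'Z,
        ⟨⟨hsub, fun h => hne (Finset.Subset.antisymm hsub h)⟩, hr'd⟩⟩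
    calc dS S = (Kr r').card := by
          unfold dS; rw [hd, Kr_card]; unfold ruleLen; rw [heq]
      _ ≤ K.card := Finset.card_le_card (hcond.1 r' hr'Z)
      _ ≤ depthT (Be S) Γ := hcard
      _ = hEAD S := hdep
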